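/- Assume conditions (A1) and (A2) and let γ_1,…,γ_p, δ_1,…,δ_q > 0 and κ < 1 be constants such that (γ_1+δ_1)(∑_i c_i y_i + ∑_j d_j z_j) + ∑_{i=2}^p γ_i y_{i−1} + ∑_{j=2}^q δ_j z_{j−1} ≤ κ(∑_i γ_i y_i + ∑_j δ_j z_j) for all non-negative y_i, z_j. Then for all states z, z' ∈ S^≥ = ℕ₀^p × [0,∞)^q there exists a probability measure ξ on S^≥ × S^≥ whose first marginal is π^Z(z, ·), whose second marginal is π^Z(z', ·), and which satisfies ∫ Δ_{γ,δ}(u, u') dξ(u, u') ≤ κ · Δ_{γ,δ}(z, z'). -/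

import Mathlib

open MeasureTheory ProbabilityTheory ENNReal

/-- The state space `S^≥ = ℕ₀^{p+1} × [0,∞)^{q+1}` of the squared-count/volatility chain. -/
abbrev GState (p q : ℕ) := (Fin (p + 1) → ℕ) × (Fin (q + 1) → NNReal)

/-- The Markov kernel `π^Z` (as a map into measures): from state `z = (x, v)` move to
`((X², x_1,…,x_p), (f z, v_1,…,v_q))` where `X ∼ Q_{f z}`. -/
noncomputable def piZ {p q : ℕ} (f : GState p q → NNReal) (Q : Kernel NNReal ℤ)
    (z : GState p q) : Measure (GState p q) :=
  (Q (f z)).map (fun X =>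
    (Fin.cons (X.natAbs ^ 2) (Fin.init z.1), Fin.cons (f z) (Fin.init z.2)))

/-- The metric `Δ_{γ,δ}` on `S^≥`. -/
noncomputable def Delta {p q : ℕ} (γ : Fin (p + 1) → ℝ) (δ : Fin (q + 1) → ℝ)
    (z z' : GState p q) : ℝ :=
  (∑ i, γ i * |(z.1 i : ℝ) - (z'.1 i : ℝ)|) + ∑ j, δ j * |(z.2 j : ℝ) - (z'.2 j : ℝ)|

set_option linter.unusedSectionVars false
set_option maxHeartbeats 1000000

section AuxCoupling
open Set


noncomputable def cdfN (μ : Measure ℕ) (k : ℕ) : ℝ := (μ {n | n ≤ k}).toReal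

noncomputable def quantN (μ : Measure ℕ) (u : ℝ) : ℕ := sInf {k | u ≤ cdfN μ k}

variable {μ : Measure ℕ} [IsProbabilityMeasure μ]

lemma cdfN_nonneg (k : ℕ) : 0 ≤ cdfN μ k := ENNReal.toReal_nonneg

lemma cdfN_le_one (k : ℕ) : cdfN μ k ≤ 1 := by
  have := prob_le_one (μ := μ) (s := {n | n ≤ k})
  simpa [cdfN] using ENNReal.toReal_mono one_ne_top this

lemma cdfN_mono : Monotone (cdfN μ) := by
  intro a b hab
  exact ENNReal.toReal_mono (measure_ne_top μ _)
    (measure_mono (fun n (hn : n ≤ a) => hn.trans hab))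

lemma tendsto_cdfN : Filter.Tendsto (cdfN μ) Filter.atTop (nhds 1) := by
  have h1 : Filter.Tendsto (fun k => μ (Set.Iic k)) Filter.atTop (nhds (μ Set.univ)) := by
    simpa [Set.iUnion_Iic, Function.comp_def] using tendsto_measure_iUnion_atTop (μ := μ) monotone_Iic
  have h2 : Filter.Tendsto (fun k => (μ (Set.Iic k)).toReal) Filter.atTop
      (nhds (μ Set.univ).toReal) :=
    (ENNReal.tendsto_toReal (by simp)).comp h1
  simpa using (show Filter.Tendsto (cdfN μ) Filter.atTop (nhds (μ Set.univ).toReal) from h2)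

lemma quantN_set_nonempty {u : ℝ} (hu : u < 1) : {k | u ≤ cdfN μ k}.Nonempty := by
  obtain ⟨k, hk⟩ := ((tendsto_cdfN (μ := μ)).eventually (eventually_gt_nhds hu)).exists
  exact ⟨k, hk.le⟩

lemma quantN_le {u : ℝ} {k : ℕ} (h : u ≤ cdfN μ k) : quantN μ u ≤ k := Nat.sInf_le h

lemma le_cdfN_of_quantN_le {u : ℝ} {k : ℕ} (hne : {k | u ≤ cdfN μ k}.Nonempty)
    (h : quantN μ u ≤ k) : u ≤ cdfN μ k :=
  le_trans (Nat.sInf_mem hne) (cdfN_mono h)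

lemma quantN_preimage (k : ℕ) :
    quantN μ ⁻¹' {m | m ≤ k} = Set.Iic (cdfN μ k) ∪ ⋂ m, Set.Ioi (cdfN μ m) := by
  ext u
  simp only [Set.mem_preimage, Set.mem_setOf_eq, Set.mem_union, Set.mem_Iic, Set.mem_iInter,
    Set.mem_Ioi]
  constructor
  · intro h
    by_cases hne : {k | u ≤ cdfN μ k}.Nonempty
    · exact Or.inl (le_cdfN_of_quantN_le hne h)
    · refine Or.inr fun m => ?_
      by_contra hm
      exact hne ⟨m, not_lt.1 hm⟩
  · rintro (h | h)
    · exact quantN_le h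
    · have : {k | u ≤ cdfN μ k} = ∅ := by
        ext m; simp [not_le.2 (h m)]
      simp [quantN, this]

lemma measurable_quantN : Measurable (quantN μ) := by
  apply measurable_to_countable'
  intro k
  have h0 : ∀ k, MeasurableSet (quantN μ ⁻¹' {m | m ≤ k}) := by
    intro k
    rw [quantN_preimage]
    exact (measurableSet_Iic).union (MeasurableSet.iInter fun m => measurableSet_Ioi)
  cases k with
  | zero =>
    have : (quantN μ ⁻¹' {0}) = quantN μ ⁻¹' {m | m ≤ 0} := by
      ext u; simp [Nat.le_zero]
    rw [this]; exact h0 0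
  | succ k =>
    have : (quantN μ ⁻¹' {k+1}) = quantN μ ⁻¹' {m | m ≤ k+1} \ quantN μ ⁻¹' {m | m ≤ k} := by
      ext u; simp only [Set.mem_preimage, Set.mem_singleton_iff, Set.mem_diff, Set.mem_setOf_eq]
      omega
    rw [this]; exact (h0 (k+1)).diff (h0 k)

/-- The base measure: uniform on `(0,1]`. -/
noncomputable def nu0 : Measure ℝ := volume.restrict (Set.Ioc (0:ℝ) 1)

instance : IsProbabilityMeasure (nu0) := ⟨by simp [nu0]⟩

lemma nu0_bad_null : nu0 (⋂ m, Set.Ioi (cdfN μ m)) = 0 := by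
  have hsub : (⋂ m, Set.Ioi (cdfN μ m)) ∩ Set.Ioc (0:ℝ) 1 ⊆ {1} := by
    intro u ⟨hu1, hu2⟩
    simp only [Set.mem_iInter, Set.mem_Ioi] at hu1
    have h1 : (1:ℝ) ≤ u := le_of_tendsto (tendsto_cdfN (μ := μ)) (by
      filter_upwards with k using (hu1 k).le)
    exact le_antisymm hu2.2 h1
  rw [nu0, Measure.restrict_apply' measurableSet_Ioc]
  exact measure_mono_null hsub (by simp)

lemma map_quantN_le_set (k : ℕ) : (nu0.map (quantN μ)) {m | m ≤ k} = μ {m | m ≤ k} := by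
  rw [Measure.map_apply measurable_quantN (by trivial), quantN_preimage]
  have h1 : nu0 (Set.Iic (cdfN μ k) ∪ ⋂ m, Set.Ioi (cdfN μ m)) = nu0 (Set.Iic (cdfN μ k)) := by
    refine le_antisymm ?_ (measure_mono Set.subset_union_left)
    calc nu0 (Set.Iic (cdfN μ k) ∪ ⋂ m, Set.Ioi (cdfN μ m))
        ≤ nu0 (Set.Iic (cdfN μ k)) + nu0 (⋂ m, Set.Ioi (cdfN μ m)) := measure_union_le _ _
      _ = nu0 (Set.Iic (cdfN μ k)) := by rw [nu0_bad_null, add_zero]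
  rw [h1, nu0, Measure.restrict_apply' measurableSet_Ioc]
  have h2 : Set.Iic (cdfN μ k) ∩ Set.Ioc (0:ℝ) 1 = Set.Ioc 0 (cdfN μ k) := by
    ext u
    simp only [Set.mem_inter_iff, Set.mem_Iic, Set.mem_Ioc]
    exact ⟨fun ⟨h, h'⟩ => ⟨h'.1, h⟩, fun ⟨h, h'⟩ => ⟨h', h, h'.trans (cdfN_le_one k)⟩⟩
  rw [h2, Real.volume_Ioc, sub_zero]
  exact ENNReal.ofReal_toReal (measure_ne_top μ _)

lemma map_quantN : nu0.map (quantN μ) = μ := by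
  have hle := fun k => map_quantN_le_set (μ := μ) k
  have _ : IsProbabilityMeasure (nu0.map (quantN μ)) :=
    Measure.isProbabilityMeasure_map measurable_quantN.aemeasurable
  apply MeasureTheory.Measure.ext_of_singleton
  intro k
  cases k with
  | zero =>
    have h : ({0} : Set ℕ) = {m | m ≤ 0} := by ext; simp [Nat.le_zero]
    rw [h]; exact hle 0
  | succ k =>
    have h : ({k+1} : Set ℕ) = {m | m ≤ k+1} \ {m | m ≤ k} := by
      ext; simp; omega
    rw [h, measure_diff (fun m hm => by simpa using Nat.le_succ_of_le hm)
      ((by trivial : MeasurableSet {m | m ≤ k}).nullMeasurableSet)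
      (measure_ne_top _ _), measure_diff (fun m hm => by simpa using Nat.le_succ_of_le hm)
      ((by trivial : MeasurableSet {m | m ≤ k}).nullMeasurableSet) (measure_ne_top _ _), hle, hle]

lemma quantN_mono_of_cdf_le {μ μ' : Measure ℕ} [IsProbabilityMeasure μ] [IsProbabilityMeasure μ']
    (h : ∀ k, cdfN μ' k ≤ cdfN μ k) {u : ℝ} (hu : u < 1) : quantN μ u ≤ quantN μ' u := by
  have hne : {k | u ≤ cdfN μ' k}.Nonempty := quantN_set_nonempty hu
  have hmem : u ≤ cdfN μ' (quantN μ' u) := Nat.sInf_mem hne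
  exact quantN_le (hmem.trans (h _))

lemma monotone_coupling (μ μ' : Measure ℕ) [IsProbabilityMeasure μ] [IsProbabilityMeasure μ']
    (h : ∀ k, μ' {n | n ≤ k} ≤ μ {n | n ≤ k}) :
    ∃ ν : Measure (ℕ × ℕ), IsProbabilityMeasure ν ∧ ν.map Prod.fst = μ ∧
      ν.map Prod.snd = μ' ∧ ∀ᵐ p ∂ν, p.1 ≤ p.2 := by
  have hcdf : ∀ k, cdfN μ' k ≤ cdfN μ k := fun k =>
    ENNReal.toReal_mono (measure_ne_top μ _) (h k)
  set G : ℝ → ℕ × ℕ := fun u => (quantN μ u, quantN μ' u) with hG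
  have hGm : Measurable G := measurable_quantN.prodMk measurable_quantN
  refine ⟨nu0.map G, Measure.isProbabilityMeasure_map hGm.aemeasurable, ?_, ?_, ?_⟩
  · rw [Measure.map_map measurable_fst hGm]
    exact map_quantN
  · rw [Measure.map_map measurable_snd hGm]
    exact map_quantN
  · rw [ae_map_iff hGm.aemeasurable (.of_discrete : MeasurableSet {p : ℕ × ℕ | p.1 ≤ p.2})]
    rw [ae_iff]
    refine measure_mono_null (t := Set.Ici (1:ℝ)) (fun u hu => ?_) ?_
    · simp only [Set.mem_setOf_eq, hG, not_le] at hu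
      by_contra hlt
      exact absurd (quantN_mono_of_cdf_le hcdf (not_le.1 (fun h1 => hlt h1))) (not_le.2 hu)
    · rw [nu0, Measure.restrict_apply' measurableSet_Ioc]
      have : Set.Ici (1:ℝ) ∩ Set.Ioc 0 1 = {1} := by
        ext u; simp only [Set.mem_inter_iff, Set.mem_Ici, Set.mem_Ioc, Set.mem_singleton_iff]
        constructor
        · rintro ⟨h1, _, h2⟩; linarith
        · rintro rfl; norm_num
      simp [this]

end AuxCoupling

lemma Delta_comm {p q : ℕ} (γ : Fin (p + 1) → ℝ) (δ : Fin (q + 1) → ℝ)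
    (z z' : GState p q) : Delta γ δ z z' = Delta γ δ z' z := by
  simp [Delta, abs_sub_comm]

lemma measurable_Delta {p q : ℕ} (γ : Fin (p + 1) → ℝ) (δ : Fin (q + 1) → ℝ) :
    Measurable (fun u : GState p q × GState p q => Delta γ δ u.1 u.2) := by
  unfold Delta
  apply Measurable.add <;> apply Finset.measurable_sum <;> intro i _
  · exact (measurable_const.mul
      ((((Measurable.of_discrete).comp ((measurable_pi_apply i).comp (measurable_fst.comp measurable_fst))).sub
        ((Measurable.of_discrete).comp ((measurable_pi_apply i).comp (measurable_fst.comp measurable_snd)))).abs))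
  · exact (measurable_const.mul
      (((NNReal.continuous_coe.measurable.comp ((measurable_pi_apply i).comp (measurable_snd.comp measurable_fst))).sub
        (NNReal.continuous_coe.measurable.comp ((measurable_pi_apply i).comp (measurable_snd.comp measurable_snd)))).abs))

lemma main_aux {p q : ℕ} (f : GState p q → NNReal)
    (Q : Kernel NNReal ℤ) [IsMarkovKernel Q]
    (hQmom : ∀ v : NNReal, ∫⁻ x, (x.natAbs : ℝ≥0∞) ^ 2 ∂(Q v) = v)
    (c : Fin (p + 1) → ℝ) (d : Fin (q + 1) → ℝ)
    (hA1 : ∀ z z' : GState p q,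
      |(f z : ℝ) - (f z' : ℝ)| ≤
        (∑ i, c i * |(z.1 i : ℝ) - (z'.1 i : ℝ)|) + ∑ j, d j * |(z.2 j : ℝ) - (z'.2 j : ℝ)|)
    (hA2 : ∀ v v' : NNReal, v < v' → ∀ k : ℕ,
      Q v' {x : ℤ | x.natAbs ≤ k} ≤ Q v {x : ℤ | x.natAbs ≤ k})
    (γ : Fin (p + 1) → ℝ) (δ : Fin (q + 1) → ℝ) (κ : ℝ)
    (hγ : ∀ i, 0 < γ i) (hδ : ∀ j, 0 < δ j)
    (hcontr : ∀ (y : Fin (p + 1) → ℝ) (w : Fin (q + 1) → ℝ),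
      (∀ i, 0 ≤ y i) → (∀ j, 0 ≤ w j) →
      (γ 0 + δ 0) * ((∑ i, c i * y i) + ∑ j, d j * w j)
          + (∑ i : Fin p, γ i.succ * y i.castSucc) + (∑ j : Fin q, δ j.succ * w j.castSucc)
        ≤ κ * ((∑ i, γ i * y i) + ∑ j, δ j * w j))
    (z z' : GState p q) (hord : f z ≤ f z') :
    ∃ ξ : Measure (GState p q × GState p q),
      IsProbabilityMeasure ξ ∧
      ξ.map Prod.fst = piZ f Q z ∧ ξ.map Prod.snd = piZ f Q z' ∧
      ∫⁻ u, ENNReal.ofReal (Delta γ δ u.1 u.2) ∂ξ ≤ ENNReal.ofReal (κ * Delta γ δ z z') := by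
  classical
  set v := f z with hv
  set v' := f z' with hv'
  have hna : Measurable (fun x : ℤ => x.natAbs) := .of_discrete
  set μ : Measure ℕ := (Q v).map (fun x : ℤ => x.natAbs) with hμ
  set μ' : Measure ℕ := (Q v').map (fun x : ℤ => x.natAbs) with hμ'
  have : IsProbabilityMeasure μ := Measure.isProbabilityMeasure_map hna.aemeasurable
  have : IsProbabilityMeasure μ' := Measure.isProbabilityMeasure_map hna.aemeasurable
  have hsq : Measurable (fun n : ℕ => (n : ℝ≥0∞) ^ 2) := .of_discrete
  have hmom : ∫⁻ n, (n : ℝ≥0∞) ^ 2 ∂μ = (v : ℝ≥0∞) := by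
    rw [hμ, lintegral_map hsq hna]; exact hQmom v
  have hmom' : ∫⁻ n, (n : ℝ≥0∞) ^ 2 ∂μ' = (v' : ℝ≥0∞) := by
    rw [hμ', lintegral_map hsq hna]; exact hQmom v'
  have hcdf : ∀ k, μ' {n | n ≤ k} ≤ μ {n | n ≤ k} := by
    intro k
    rw [hμ, hμ', Measure.map_apply hna .of_discrete, Measure.map_apply hna .of_discrete]
    rcases lt_or_eq_of_le hord with h | h
    · exact hA2 v v' h k
    · rw [h]
  obtain ⟨ν, hνP, hν1, hν2, hνae⟩ := monotone_coupling μ μ' hcdf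
  set g : ℕ → GState p q :=
    fun n => (Fin.cons (n ^ 2) (Fin.init z.1), Fin.cons v (Fin.init z.2)) with hg
  set g' : ℕ → GState p q :=
    fun n => (Fin.cons (n ^ 2) (Fin.init z'.1), Fin.cons v' (Fin.init z'.2)) with hg'
  have hgm : Measurable g := .of_discrete
  have hg'm : Measurable g' := .of_discrete
  set F : ℕ × ℕ → GState p q × GState p q := fun pr => (g pr.1, g' pr.2) with hF
  have hFm : Measurable F := .of_discrete
  refine ⟨ν.map F, Measure.isProbabilityMeasure_map hFm.aemeasurable, ?_, ?_, ?_⟩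
  · rw [Measure.map_map measurable_fst hFm,
      show (Prod.fst ∘ F) = g ∘ Prod.fst from rfl,
      ← Measure.map_map hgm measurable_fst, hν1, hμ, Measure.map_map hgm hna]
    rfl
  · rw [Measure.map_map measurable_snd hFm,
      show (Prod.snd ∘ F) = g' ∘ Prod.snd from rfl,
      ← Measure.map_map hg'm measurable_snd, hν2, hμ', Measure.map_map hg'm hna]
    rfl
  · -- the integral estimate
    set y : Fin (p+1) → ℝ := fun i => |(z.1 i : ℝ) - (z'.1 i : ℝ)| with hy
    set w : Fin (q+1) → ℝ := fun j => |(z.2 j : ℝ) - (z'.2 j : ℝ)| with hw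
    have hy0 : ∀ i, 0 ≤ y i := fun i => abs_nonneg _
    have hw0 : ∀ j, 0 ≤ w j := fun j => abs_nonneg _
    set C : ℝ := (∑ i : Fin p, γ i.succ * y i.castSucc)
      + (δ 0 * |(v : ℝ) - (v' : ℝ)| + ∑ j : Fin q, δ j.succ * w j.castSucc) with hC
    have hC0 : 0 ≤ C := by
      have h1 : ∀ i : Fin p, 0 ≤ γ i.succ * y i.castSucc :=
        fun i => mul_nonneg (hγ _).le (hy0 _)
      have h2 : ∀ j : Fin q, 0 ≤ δ j.succ * w j.castSucc :=
        fun j => mul_nonneg (hδ _).le (hw0 _)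
      have := Finset.sum_nonneg (s := Finset.univ) (fun i _ => h1 i)
      have := Finset.sum_nonneg (s := Finset.univ) (fun j _ => h2 j)
      have := mul_nonneg (hδ 0).le (abs_nonneg ((v:ℝ) - (v':ℝ)))
      linarith
    have h_eq : ∀ pr : ℕ × ℕ,
        Delta γ δ (g pr.1) (g' pr.2) = γ 0 * |(pr.1:ℝ)^2 - (pr.2:ℝ)^2| + C := by
      intro pr
      simp only [Delta, hg, hg', Fin.sum_univ_succ, Fin.cons_zero, Fin.cons_succ, Fin.init,
        hC, hy, hw]
      push_cast
      ring
    rw [lintegral_map ((measurable_Delta γ δ).ennreal_ofReal) hFm]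
    have habs_m : Measurable (fun pr : ℕ × ℕ => ENNReal.ofReal |(pr.1:ℝ)^2 - (pr.2:ℝ)^2|) :=
      .of_discrete
    have hI2 : ∫⁻ pr, ENNReal.ofReal |(pr.1:ℝ)^2 - (pr.2:ℝ)^2| ∂ν
        = ENNReal.ofReal ((v':ℝ) - (v:ℝ)) := by
      have hcongr : ∀ᵐ pr ∂ν, ENNReal.ofReal |(pr.1:ℝ)^2 - (pr.2:ℝ)^2|
          = ((pr.2:ℝ≥0∞)^2 - (pr.1:ℝ≥0∞)^2) := by
        filter_upwards [hνae] with pr hpr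
        have h1 : (pr.1:ℝ) ≤ (pr.2:ℝ) := Nat.cast_le.2 hpr
        have h1' : (pr.1:ℝ)^2 ≤ (pr.2:ℝ)^2 := by nlinarith [Nat.cast_nonneg (α := ℝ) pr.1]
        rw [abs_sub_comm, abs_of_nonneg (by linarith),
          ENNReal.ofReal_sub _ (by positivity),
          ENNReal.ofReal_pow (by positivity), ENNReal.ofReal_pow (by positivity),
          ENNReal.ofReal_natCast, ENNReal.ofReal_natCast]
      rw [lintegral_congr_ae hcongr]
      have hfin : ∫⁻ pr, ((pr.1:ℝ≥0∞))^2 ∂ν = (v : ℝ≥0∞) := by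
        rw [← hmom, ← hν1, lintegral_map hsq measurable_fst]
      have hfin' : ∫⁻ pr, ((pr.2:ℝ≥0∞))^2 ∂ν = (v' : ℝ≥0∞) := by
        rw [← hmom', ← hν2, lintegral_map hsq measurable_snd]
      rw [lintegral_sub (Measurable.of_discrete) (by rw [hfin]; exact coe_ne_top)
        (by filter_upwards [hνae] with pr hpr;
            exact pow_le_pow_left' (by exact_mod_cast Nat.cast_le.2 hpr) 2)]
      rw [hfin, hfin']
      rw [← ENNReal.ofReal_coe_nnreal, ← ENNReal.ofReal_coe_nnreal,
        ← ENNReal.ofReal_sub _ v.coe_nonneg]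
    calc ∫⁻ pr, ENNReal.ofReal (Delta γ δ (F pr).1 (F pr).2) ∂ν
        = ∫⁻ pr, (ENNReal.ofReal (γ 0 * |(pr.1:ℝ)^2 - (pr.2:ℝ)^2|) + ENNReal.ofReal C) ∂ν := by
          refine lintegral_congr fun pr => ?_
          rw [show (F pr).1 = g pr.1 from rfl, show (F pr).2 = g' pr.2 from rfl, h_eq pr,
            ENNReal.ofReal_add (mul_nonneg (hγ 0).le (abs_nonneg _)) hC0]
      _ = ENNReal.ofReal (γ 0) * ENNReal.ofReal ((v':ℝ) - (v:ℝ)) + ENNReal.ofReal C := by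
          rw [lintegral_add_right _ measurable_const, lintegral_const, measure_univ, mul_one]
          congr 1
          have : ∀ pr : ℕ × ℕ, ENNReal.ofReal (γ 0 * |(pr.1:ℝ)^2 - (pr.2:ℝ)^2|)
              = ENNReal.ofReal (γ 0) * ENNReal.ofReal |(pr.1:ℝ)^2 - (pr.2:ℝ)^2| :=
            fun pr => ENNReal.ofReal_mul (hγ 0).le
          rw [lintegral_congr this, lintegral_const_mul _ habs_m, hI2]
      _ ≤ ENNReal.ofReal (κ * Delta γ δ z z') := by
          rw [← ENNReal.ofReal_mul (hγ 0).le, ← ENNReal.ofReal_add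
            (mul_nonneg (hγ 0).le (sub_nonneg.2 (NNReal.coe_le_coe.2 hord))) hC0]
          apply ENNReal.ofReal_le_ofReal
          have hvv : (v:ℝ) ≤ (v':ℝ) := NNReal.coe_le_coe.2 hord
          have habs : (v':ℝ) - (v:ℝ) = |(v:ℝ) - (v':ℝ)| := by
            rw [abs_sub_comm, abs_of_nonneg (by linarith)]
          have hS := hA1 z z'
          have hk := hcontr y w hy0 hw0
          have hDelta : Delta γ δ z z' = (∑ i, γ i * y i) + ∑ j, δ j * w j := rfl
          rw [hDelta, hC, habs]
          set S := (∑ i, c i * y i) + ∑ j, d j * w j with hs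
          have hS' : |(v:ℝ) - (v':ℝ)| ≤ S := hS
          have h1 : γ 0 * |(v:ℝ) - (v':ℝ)| ≤ γ 0 * S :=
            mul_le_mul_of_nonneg_left hS' (hγ 0).le
          have h2 : δ 0 * |(v:ℝ) - (v':ℝ)| ≤ δ 0 * S :=
            mul_le_mul_of_nonneg_left hS' (hδ 0).le
          nlinarith [hk]

/-- Proposition 2.1(i): under (A1), (A2) and the weight inequality of Lemma 2.1, for any two
states `z, z'` there is a coupling `ξ` of `π^Z(z,·)` and `π^Z(z',·)` with
`∫ Δ_{γ,δ} dξ ≤ κ Δ_{γ,δ}(z, z')`. -/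
theorem stmt1 {p q : ℕ} (f : GState p q → NNReal) (hf : Measurable f)
    (Q : Kernel NNReal ℤ) [IsMarkovKernel Q]
    -- second-moment parametrization (21.1c): `∫ x² dQ_v(x) = v`
    (hQmom : ∀ v : NNReal, ∫⁻ x, (x.natAbs : ℝ≥0∞) ^ 2 ∂(Q v) = v)
    -- (A1): contraction of the volatility function
    (c : Fin (p + 1) → ℝ) (d : Fin (q + 1) → ℝ)
    (hc : ∀ i, 0 ≤ c i) (hd : ∀ j, 0 ≤ d j)
    (hcd : (∑ i, c i) + ∑ j, d j < 1)
    (hA1 : ∀ z z' : GState p q,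
      |(f z : ℝ) - (f z' : ℝ)| ≤
        (∑ i, c i * |(z.1 i : ℝ) - (z'.1 i : ℝ)|) + ∑ j, d j * |(z.2 j : ℝ) - (z'.2 j : ℝ)|)
    -- (A2): stochastic monotonicity of `|X|` in `v`
    (hA2 : ∀ v v' : NNReal, v < v' → ∀ k : ℕ,
      Q v' {x : ℤ | x.natAbs ≤ k} ≤ Q v {x : ℤ | x.natAbs ≤ k})
    -- weights as in Lemma 2.1
    (γ : Fin (p + 1) → ℝ) (δ : Fin (q + 1) → ℝ) (κ : ℝ)
    (hγ : ∀ i, 0 < γ i) (hδ : ∀ j, 0 < δ j) (hκ : κ < 1)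
    (hcontr : ∀ (y : Fin (p + 1) → ℝ) (w : Fin (q + 1) → ℝ),
      (∀ i, 0 ≤ y i) → (∀ j, 0 ≤ w j) →
      (γ 0 + δ 0) * ((∑ i, c i * y i) + ∑ j, d j * w j)
          + (∑ i : Fin p, γ i.succ * y i.castSucc) + (∑ j : Fin q, δ j.succ * w j.castSucc)
        ≤ κ * ((∑ i, γ i * y i) + ∑ j, δ j * w j)) :
    ∀ z z' : GState p q, ∃ ξ : Measure (GState p q × GState p q),
      IsProbabilityMeasure ξ ∧
      ξ.map Prod.fst = piZ f Q z ∧ ξ.map Prod.snd = piZ f Q z' ∧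
      ∫⁻ u, ENNReal.ofReal (Delta γ δ u.1 u.2) ∂ξ ≤ ENNReal.ofReal (κ * Delta γ δ z z') := by
  intro z z'
  rcases le_total (f z) (f z') with h | h
  · exact main_aux f Q hQmom c d hA1 hA2 γ δ κ hγ hδ hcontr z z' h
  · obtain ⟨ξ, hP, h1, h2, h3⟩ := main_aux f Q hQmom c d hA1 hA2 γ δ κ hγ hδ hcontr z' z h
    refine ⟨ξ.map Prod.swap, Measure.isProbabilityMeasure_map measurable_swap.aemeasurable, ?_, ?_, ?_⟩
    · rw [Measure.map_map measurable_fst measurable_swap,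
        show (Prod.fst ∘ Prod.swap : GState p q × GState p q → GState p q) = Prod.snd from rfl]
      exact h2
    · rw [Measure.map_map measurable_snd measurable_swap,
        show (Prod.snd ∘ Prod.swap : GState p q × GState p q → GState p q) = Prod.fst from rfl]
      exact h1
    · rw [lintegral_map ((measurable_Delta γ δ).ennreal_ofReal) measurable_swap,
        lintegral_congr (fun u : GState p q × GState p q => by
          rw [show (Prod.swap u).1 = u.2 from rfl, show (Prod.swap u).2 = u.1 from rfl,
            Delta_comm]),
        Delta_comm γ δ z z']
      exact h3
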